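/- Let q be a power of 2, m ≥ 2, and n = q^m + 1. An integer a with 0 ≤ a ≤ q^m is the smallest element of its q-cyclotomic coset modulo n if and only if a ≤ ⌊(q^{m+1} + q)/(2(q+1))⌋ and a cannot be written as l·q^{m−i} + h for any integers i, l, h with 1 ≤ i < m, 1 ≤ l ≤ ⌊(q^i − 1)q/(2(q+1))⌋, and −l(q^{m−i} − 1)/(q^i + 1) < h < l(q^{m−i} + 1)/(q^i − 1). -/
import Mathlib


private lemma emod_eq_of_modEq {x r N : ℤ} (h : x ≡ r [ZMOD N]) (h0 : 0 ≤ r) (h1 : r < N) :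
    x % N = r := by
  rw [Int.ModEq] at h; rw [h, Int.emod_eq_of_lt h0 h1]

private lemma pow_m_modEqA (q n m : ℕ) (hn : n = q ^ m + 1) :
    (q:ℤ)^m ≡ -1 [ZMOD (n:ℤ)] := by
  apply Int.modEq_iff_dvd.mpr
  have : ((n:ℤ)) = (q:ℤ)^m + 1 := by exact_mod_cast congrArg (Nat.cast : ℕ → ℤ) hn
  exact ⟨-1, by linarith⟩

private lemma wit_of_notLeader (q n m a : ℕ) (hm : 1 ≤ m)
    (hn : n = q ^ m + 1) (ha : a ≤ q ^ m)
    (j : ℕ) (hj : (a * q ^ j) % n < a) :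
    ∃ j' : ℕ, 1 ≤ j' ∧ j' ≤ m ∧ ∃ c : ℤ, |(a:ℤ) * (q:ℤ)^j' - c * (n:ℤ)| < (a:ℤ) := by
  have hN : ((n:ℤ)) = (q:ℤ)^m + 1 := by exact_mod_cast congrArg (Nat.cast : ℕ → ℤ) hn
  set r : ℕ := (a * q ^ j) % n with hrdef
  have hrZ : ((a:ℤ) * (q:ℤ)^j) % (n:ℤ) = (r:ℤ) := by
    rw [hrdef]; push_cast; ring
  have hQm : (q:ℤ)^m ≡ -1 [ZMOD (n:ℤ)] := pow_m_modEqA q n m hn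
  have hQ2m : (q:ℤ)^(2*m) ≡ 1 [ZMOD (n:ℤ)] := by
    have := hQm.mul hQm
    simpa [← pow_add, two_mul] using this
  set j0 := j % (2*m) with hj0
  have hjsplit : j = 2*m * (j / (2*m)) + j0 := (Nat.div_add_mod j (2*m)).symm
  have hcong : (a:ℤ) * (q:ℤ)^j ≡ (a:ℤ) * (q:ℤ)^j0 [ZMOD (n:ℤ)] := by
    conv_lhs => rw [hjsplit]
    rw [pow_add, pow_mul]
    calc (a:ℤ) * (((q:ℤ)^(2*m))^(j / (2*m)) * (q:ℤ)^j0)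
        ≡ (a:ℤ) * (1^(j / (2*m)) * (q:ℤ)^j0) [ZMOD (n:ℤ)] :=
          (Int.ModEq.refl _).mul ((hQ2m.pow _).mul (Int.ModEq.refl _))
      _ = (a:ℤ) * (q:ℤ)^j0 := by ring
  have hr0 : (a:ℤ) * (q:ℤ)^j0 ≡ (r:ℤ) [ZMOD (n:ℤ)] := by
    have : (a:ℤ) * (q:ℤ)^j ≡ (r:ℤ) [ZMOD (n:ℤ)] := by
      rw [Int.ModEq, ← hrZ, Int.emod_emod_of_dvd _ dvd_rfl]
    exact hcong.symm.trans this
  have hra : r < a := hj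
  have hj0ne : j0 ≠ 0 := by
    intro h0
    rw [h0, pow_zero, mul_one] at hr0
    have : ((a:ℤ)) % n = (r:ℤ) := by
      rw [Int.ModEq] at hr0
      rw [hr0, Int.emod_eq_of_lt (by positivity) (by exact_mod_cast by omega)]
    rw [Int.emod_eq_of_lt (by positivity) (by exact_mod_cast by omega)] at this
    omega
  rcases le_or_gt j0 m with hle | hgt
  · refine ⟨j0, by omega, hle, ((a:ℤ) * (q:ℤ)^j0 - r)/ (n:ℤ), ?_⟩
    obtain ⟨c, hc⟩ := (Int.ModEq.dvd hr0)
    -- n ∣ r - a*q^j0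
    have : (a:ℤ) * (q:ℤ)^j0 - ((a:ℤ) * (q:ℤ)^j0 - r)/(n:ℤ) * n = r := by
      have hceq : (a:ℤ) * (q:ℤ)^j0 - r = (-c) * n := by linarith [hc]
      rw [hceq]
      have hn0 : ((n:ℤ)) ≠ 0 := Int.natCast_ne_zero.mpr (by omega)
      rw [Int.mul_ediv_cancel _ hn0]
      linarith [hc]
    rw [this]
    rw [abs_of_nonneg (by positivity)]
    exact_mod_cast hra
  · -- m < j0 < 2m
    set j1 := j0 - m with hj1
    have hj1m : 1 ≤ j1 ∧ j1 ≤ m := by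
      constructor
      · omega
      · have : j0 < 2*m := Nat.mod_lt _ (by omega)
        omega
    have hsplit2 : j0 = j1 + m := by omega
    have hcong2 : (a:ℤ) * (q:ℤ)^j1 * (q:ℤ)^m ≡ (r:ℤ) [ZMOD (n:ℤ)] := by
      have heq : (a:ℤ) * (q:ℤ)^j0 = (a:ℤ) * (q:ℤ)^j1 * (q:ℤ)^m := by
        rw [hsplit2, pow_add]; ring
      rw [← heq]; exact hr0
    have hcong3 : (a:ℤ) * (q:ℤ)^j1 ≡ -(r:ℤ) [ZMOD (n:ℤ)] := by
      have h1 : (a:ℤ) * (q:ℤ)^j1 * (q:ℤ)^m ≡ (a:ℤ) * (q:ℤ)^j1 * (-1) [ZMOD (n:ℤ)] :=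
        (Int.ModEq.refl _).mul hQm
      have h2 : (a:ℤ) * (q:ℤ)^j1 * (-1) ≡ (r:ℤ) [ZMOD (n:ℤ)] := h1.symm.trans hcong2
      simpa using h2.neg
    obtain ⟨c, hc⟩ := Int.ModEq.dvd hcong3
    refine ⟨j1, hj1m.1, hj1m.2, -c, ?_⟩
    have : (a:ℤ) * (q:ℤ)^j1 - (-c) * n = -(r:ℤ) := by linarith
    rw [this, abs_neg, abs_of_nonneg (by positivity)]
    exact_mod_cast hra


private lemma pow_m_modEq' (q n m : ℕ) (hn : n = q ^ m + 1) :
    (q:ℤ)^m ≡ -1 [ZMOD (n:ℤ)] := by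
  apply Int.modEq_iff_dvd.mpr
  have : ((n:ℤ)) = (q:ℤ)^m + 1 := by exact_mod_cast congrArg (Nat.cast : ℕ → ℤ) hn
  exact ⟨-1, by linarith⟩

private lemma notLeader_of_wit (q n m a : ℕ) (hq : 1 ≤ q) (hn : n = q ^ m + 1) (ha : a ≤ q ^ m)
    (j : ℕ) (c : ℤ) (hw : |(a:ℤ) * (q:ℤ)^j - c * (n:ℤ)| < (a:ℤ)) :
    ∃ j' : ℕ, (a * q ^ j') % n < a := by
  have hN : ((n:ℤ)) = (q:ℤ)^m + 1 := by exact_mod_cast congrArg (Nat.cast : ℕ → ℤ) hn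
  have hQ : (1:ℤ) ≤ (q:ℤ) := by exact_mod_cast hq
  have haN : (a:ℤ) < (n:ℤ) := by
    have : a < n := by omega
    exact_mod_cast this
  have hNpos : (0:ℤ) < (n:ℤ) := by exact_mod_cast (by omega : 0 < n)
  set r : ℕ := (a * q ^ j) % n with hrdef
  have hrZ : ((r:ℤ)) = ((a:ℤ) * (q:ℤ)^j) % (n:ℤ) := by rw [hrdef]; push_cast; ring
  have hrlt : (r:ℤ) < (n:ℤ) := by
    rw [hrZ]; exact Int.emod_lt_of_pos _ hNpos
  have hrnn : (0:ℤ) ≤ (r:ℤ) := by positivity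
  set D := (a:ℤ) * (q:ℤ)^j - c * (n:ℤ) with hD
  have hDr : (n:ℤ) ∣ D - r := by
    rw [hD, hrZ]
    have : ((a:ℤ) * (q:ℤ)^j - ((a:ℤ) * (q:ℤ)^j) % (n:ℤ)) = (n:ℤ) * (((a:ℤ) * (q:ℤ)^j) / (n:ℤ)) := by
      rw [Int.emod_def]; ring
    have h2 : (a:ℤ) * (q:ℤ)^j - c * (n:ℤ) - ((a:ℤ) * (q:ℤ)^j) % (n:ℤ)
        = (n:ℤ) * (((a:ℤ) * (q:ℤ)^j) / (n:ℤ)) - c * n := by linarith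
    rw [h2]
    exact dvd_sub (Dvd.intro _ rfl) (Dvd.intro_left _ rfl)
  have habs := abs_lt.mp hw
  obtain ⟨k, hk⟩ := hDr
  have hk01 : k = 0 ∨ k = -1 := by
    rcases lt_trichotomy k 0 with h | h | h
    · right
      by_contra hne
      have : k ≤ -2 := by omega
      nlinarith [habs.1, habs.2]
    · left; exact h
    · exfalso
      have : 1 ≤ k := h
      nlinarith [habs.1, habs.2]
  rcases hk01 with h0 | h1
  · refine ⟨j, ?_⟩
    have : (r:ℤ) = D := by rw [h0] at hk; linarith
    have : (r:ℤ) < (a:ℤ) := by rw [this]; exact lt_of_le_of_lt (le_abs_self _) hw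
    exact_mod_cast this
  · -- D = r - n, i.e. n - r < a ; use j + m
    have hDrn : D = (r:ℤ) - n := by rw [h1] at hk; linarith
    have hnra : (n:ℤ) - r < a := by
      have := habs.1
      rw [hDrn] at this
      linarith
    refine ⟨j + m, ?_⟩
    have hQm : (q:ℤ)^m ≡ -1 [ZMOD (n:ℤ)] := pow_m_modEq' q n m hn
    have hcong : (a:ℤ) * (q:ℤ)^(j+m) ≡ (n:ℤ) - r [ZMOD (n:ℤ)] := by
      have h1' : (a:ℤ) * (q:ℤ)^(j+m) = ((a:ℤ) * (q:ℤ)^j) * (q:ℤ)^m := by rw [pow_add]; ring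
      have h2' : ((a:ℤ) * (q:ℤ)^j) * (q:ℤ)^m ≡ ((a:ℤ) * (q:ℤ)^j) * (-1) [ZMOD (n:ℤ)] :=
        (Int.ModEq.refl _).mul hQm
      have h3' : (a:ℤ) * (q:ℤ)^j ≡ (r:ℤ) [ZMOD (n:ℤ)] := by
        rw [Int.ModEq, hrZ, Int.emod_emod_of_dvd _ dvd_rfl]
      have h4' : ((a:ℤ) * (q:ℤ)^j) * (-1) ≡ (r:ℤ) * (-1) [ZMOD (n:ℤ)] := h3'.mul_right _
      have h5' : (r:ℤ) * (-1) ≡ (n:ℤ) - r [ZMOD (n:ℤ)] := by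
        apply Int.modEq_iff_dvd.mpr
        exact ⟨1, by ring⟩
      rw [h1']
      exact (h2'.trans h4').trans h5'
    have hmod : ((a:ℤ) * (q:ℤ)^(j+m)) % (n:ℤ) = (n:ℤ) - r := by
      rw [Int.ModEq] at hcong
      rw [hcong, Int.emod_eq_of_lt (by linarith) (by linarith)]
    have : ((a * q ^ (j+m)) % n : ℕ) = ((n:ℤ) - r).toNat := by
      have : (((a * q ^ (j+m)) % n : ℕ) : ℤ) = (n:ℤ) - r := by push_cast; rw [← hmod]
      omega
    omega


private lemma wit_of_large (q n m a : ℕ) (hq : 2 ≤ q) (hqe : Even q) (hm : 1 ≤ m)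
    (hn : n = q ^ m + 1) (ha : a ≤ q ^ m)
    (hla : (q ^ (m + 1) + q) / (2 * (q + 1)) < a) :
    ∃ j : ℕ, 1 ≤ j ∧ j ≤ m ∧ ∃ c : ℤ, |(a:ℤ) * (q:ℤ)^j - c * (n:ℤ)| < (a:ℤ) := by
  have hN : ((n:ℤ)) = (q:ℤ)^m + 1 := by exact_mod_cast congrArg (Nat.cast : ℕ → ℤ) hn
  have hd : q ^ (m + 1) + q < a * (2 * (q + 1)) :=
    (Nat.div_lt_iff_lt_mul (by omega)).mp hla
  have hqn : q * n = q ^ (m+1) + q := by rw [hn]; ring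
  have hdZ : (q:ℤ) * n < (a:ℤ) * (2 * ((q:ℤ) + 1)) := by
    have : q * n < a * (2 * (q + 1)) := by omega
    exact_mod_cast this
  have ha1 : 1 ≤ a := by
    by_contra h
    have : a = 0 := by omega
    subst this
    simp at hdZ
    nlinarith [hN, (by positivity : (0:ℤ) < (q:ℤ)), (by exact_mod_cast hq : (2:ℤ) ≤ (q:ℤ))]
  have haZ : (1:ℤ) ≤ (a:ℤ) := by exact_mod_cast ha1
  have hqZ : (2:ℤ) ≤ (q:ℤ) := by exact_mod_cast hq
  have haqm : (a:ℤ) ≤ (q:ℤ)^m := by exact_mod_cast ha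
  rcases le_or_gt (2*a) n with hle | hgt
  · -- j = 1, c = q/2
    obtain ⟨u, hu⟩ := hqe
    have huZ : (q:ℤ) = 2 * (u:ℤ) := by exact_mod_cast (by omega : q = 2 * u)
    refine ⟨1, le_refl 1, hm, (u:ℤ), ?_⟩
    have hleZ : 2 * (a:ℤ) ≤ (n:ℤ) := by exact_mod_cast hle
    rw [pow_one, abs_lt]
    constructor
    · nlinarith
    · nlinarith
  · -- j = m, c = a - 1
    refine ⟨m, hm, le_refl m, (a:ℤ) - 1, ?_⟩
    have hgtZ : ((n:ℤ)) < 2 * (a:ℤ) := by exact_mod_cast hgt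
    have hval : (a:ℤ) * (q:ℤ)^m - ((a:ℤ) - 1) * (n:ℤ) = (n:ℤ) - (a:ℤ) := by
      rw [hN]; ring
    rw [hval, abs_lt]
    constructor
    · nlinarith [hN, (by positivity : (0:ℤ) ≤ (q:ℤ)^m)]
    · linarith

private lemma wit_of_triple (q n m a : ℕ) (hq : 2 ≤ q) (hn : n = q ^ m + 1)
    (i l : ℕ) (h : ℤ) (hi1 : 1 ≤ i) (him : i < m) (hl1 : 1 ≤ l)
    (hineq1 : -(l : ℤ) * ((q : ℤ) ^ (m - i) - 1) < h * ((q : ℤ) ^ i + 1))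
    (hineq2 : h * ((q : ℤ) ^ i - 1) < (l : ℤ) * ((q : ℤ) ^ (m - i) + 1))
    (heq : (a : ℤ) = (l : ℤ) * (q : ℤ) ^ (m - i) + h) :
    1 ≤ a ∧ ∃ j : ℕ, 1 ≤ j ∧ j ≤ m ∧ ∃ c : ℤ, |(a:ℤ) * (q:ℤ)^j - c * (n:ℤ)| < (a:ℤ) := by
  have hN : ((n:ℤ)) = (q:ℤ)^m + 1 := by exact_mod_cast congrArg (Nat.cast : ℕ → ℤ) hn
  have hpow : (q:ℤ)^(m-i) * (q:ℤ)^i = (q:ℤ)^m := by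
    rw [← pow_add]
    congr 1
    omega
  have hval : (a:ℤ) * (q:ℤ)^i - (l:ℤ) * (n:ℤ) = h * (q:ℤ)^i - l := by
    rw [heq, hN]
    nlinarith [hpow]
  have hlZ : (1:ℤ) ≤ (l:ℤ) := by exact_mod_cast hl1
  have habs : |(a:ℤ) * (q:ℤ)^i - (l:ℤ) * (n:ℤ)| < (a:ℤ) := by
    rw [hval, abs_lt, heq]
    constructor
    · nlinarith
    · nlinarith
  have hNpos : (1:ℤ) ≤ (n:ℤ) := by exact_mod_cast (by omega : 1 ≤ n)
  have ha1 : (1:ℤ) ≤ (a:ℤ) := by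
    have h1 : -(a:ℤ) < (a:ℤ) * (q:ℤ)^i - (l:ℤ) * (n:ℤ) := (abs_lt.mp habs).1
    have hqi : (1:ℤ) ≤ (q:ℤ)^i := one_le_pow₀ (by exact_mod_cast (by omega : 1 ≤ q))
    nlinarith
  exact ⟨by exact_mod_cast ha1, i, hi1, by omega, (l:ℤ), habs⟩

set_option maxHeartbeats 1000000 in

private lemma triple_of_wit (q n m a : ℕ) (hq : 2 ≤ q) (hqe : Even q) (hm : 2 ≤ m)
    (hn : n = q ^ m + 1) (ha : a ≤ q ^ m)
    (hd : a ≤ (q ^ (m + 1) + q) / (2 * (q + 1)))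
    (j : ℕ) (hj1 : 1 ≤ j) (hjm : j ≤ m) (c : ℤ)
    (hw : |(a:ℤ) * (q:ℤ)^j - c * (n:ℤ)| < (a:ℤ)) :
    ∃ (i l : ℕ) (h : ℤ), 1 ≤ i ∧ i < m ∧ 1 ≤ l ∧
      l ≤ (q ^ i - 1) * q / (2 * (q + 1)) ∧
      (-(l : ℤ) * ((q : ℤ) ^ (m - i) - 1) < h * ((q : ℤ) ^ i + 1)) ∧
      (h * ((q : ℤ) ^ i - 1) < (l : ℤ) * ((q : ℤ) ^ (m - i) + 1)) ∧
      (a : ℤ) = (l : ℤ) * (q : ℤ) ^ (m - i) + h := by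
  have hN : ((n:ℤ)) = (q:ℤ)^m + 1 := by exact_mod_cast congrArg (Nat.cast : ℕ → ℤ) hn
  have hqZ : (2:ℤ) ≤ (q:ℤ) := by exact_mod_cast hq
  have haZ : (a:ℤ) ≤ (q:ℤ)^m := by exact_mod_cast ha
  have hNpos : (0:ℤ) < (n:ℤ) := by exact_mod_cast (by omega : 0 < n)
  have ha1 : (1:ℤ) ≤ (a:ℤ) := by
    have : (0:ℤ) ≤ |(a:ℤ) * (q:ℤ)^j - c * (n:ℤ)| := abs_nonneg _
    have h2 : (0:ℤ) < (a:ℤ) := lt_of_le_of_lt this hw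
    exact_mod_cast h2
  have hdm : a * (2 * (q + 1)) ≤ q ^ (m + 1) + q := (Nat.le_div_iff_mul_le (by omega)).mp hd
  have hqn : q ^ (m+1) + q = q * n := by rw [hn]; ring
  have hdZ : (a:ℤ) * (2 * ((q:ℤ) + 1)) ≤ (q:ℤ) * (n:ℤ) := by
    have : a * (2 * (q + 1)) ≤ q * n := by omega
    exact_mod_cast this
  have habs := abs_lt.mp hw
  -- rule out j = m
  have hjm' : j < m := by
    rcases lt_or_eq_of_le hjm with h | h
    · exact h
    · exfalso
      subst h
      set k : ℤ := (a:ℤ) - c with hk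
      have hval : (a:ℤ) * (q:ℤ)^j - c * (n:ℤ) = k * (n:ℤ) - (a:ℤ) := by
        rw [hk, hN]; ring
      have h1 := habs.1; have h2 := habs.2
      rw [hval] at h1 h2
      have hkN1 : 0 < k * (n:ℤ) := by linarith
      have hkN2 : k * (n:ℤ) < 2 * (a:ℤ) := by linarith
      have hk1 : 1 ≤ k := by nlinarith
      have hANlt : 2 * (a:ℤ) < 2 * (n:ℤ) := by
        have : (q:ℤ)^j < (n:ℤ) := by rw [hN]; linarith
        linarith
      have hk2 : k ≤ 1 := by nlinarith
      have hkeq : k = 1 := le_antisymm hk2 hk1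
      rw [hkeq, one_mul] at hkN2
      nlinarith
  -- now 1 ≤ j < m ; show c ≥ 1
  have hc1 : 1 ≤ c := by
    by_contra hcon
    push_neg at hcon
    have hc0 : c ≤ 0 := by omega
    have hq2j : (2:ℤ) ≤ (q:ℤ)^j := by
      calc (2:ℤ) ≤ (q:ℤ) := hqZ
        _ ≤ (q:ℤ)^j := le_self_pow₀ (by linarith) (by omega)
    have hA2 : 2 * (a:ℤ) ≤ (a:ℤ) * (q:ℤ)^j := by
      have := mul_le_mul_of_nonneg_left hq2j (by linarith : (0:ℤ) ≤ (a:ℤ))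
      linarith
    have hcn : -(c * (n:ℤ)) ≥ 0 := by
      have := mul_nonpos_of_nonpos_of_nonneg hc0 (le_of_lt hNpos)
      linarith
    linarith [habs.2]
  set h : ℤ := (a:ℤ) - c * (q:ℤ)^(m-j) with hh
  have hpow : (q:ℤ)^(m-j) * (q:ℤ)^j = (q:ℤ)^m := by
    rw [← pow_add]; congr 1; omega
  have heq : (a:ℤ) = c * (q:ℤ)^(m-j) + h := by rw [hh]; ring
  have hval : (a:ℤ) * (q:ℤ)^j - c * (n:ℤ) = h * (q:ℤ)^j - c := by
    rw [hh, hN]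
    linear_combination c * hpow
  have habs1 : -((a:ℤ)) < h * (q:ℤ)^j - c := by rw [← hval]; exact habs.1
  have habs2 : h * (q:ℤ)^j - c < (a:ℤ) := by rw [← hval]; exact habs.2
  -- upper bound on 2(q+1)c
  have hlub : 2 * ((q:ℤ)+1) * c < (q:ℤ)^(j+1) + (q:ℤ) := by
    have h1 : c * (n:ℤ) < (a:ℤ) * ((q:ℤ)^j + 1) := by linarith [habs.1]
    have h3 : (a:ℤ) * (2 * ((q:ℤ) + 1)) * ((q:ℤ)^j + 1) ≤ (q:ℤ) * (n:ℤ) * ((q:ℤ)^j + 1) :=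
      mul_le_mul_of_nonneg_right hdZ (by positivity)
    have h4 : 2 * ((q:ℤ)+1) * c * (n:ℤ) < (q:ℤ) * ((q:ℤ)^j + 1) * (n:ℤ) := by nlinarith
    have h5 : 2 * ((q:ℤ)+1) * c < (q:ℤ) * ((q:ℤ)^j + 1) := lt_of_mul_lt_mul_right h4 (le_of_lt hNpos)
    calc 2 * ((q:ℤ)+1) * c < (q:ℤ) * ((q:ℤ)^j + 1) := h5
      _ = (q:ℤ)^(j+1) + (q:ℤ) := by ring
  -- parity argument: 2(q+1)c ≤ q^{j+1} - q
  have hlb : 2 * ((q:ℤ)+1) * c ≤ (q:ℤ)^(j+1) - (q:ℤ) := by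
    by_contra hcon
    push_neg at hcon
    set e : ℤ := 2 * ((q:ℤ)+1) * c - (q:ℤ)^(j+1) with he
    have he1 : -(q:ℤ) < e := by rw [he]; linarith
    have he2 : e < (q:ℤ) := by rw [he]; linarith
    have hdvd : ((q:ℤ) + 1) ∣ (e - (-1)^j) := by
      have h1 : ((q:ℤ) - (-1)) ∣ ((q:ℤ)^(j+1) - (-1)^(j+1)) := sub_dvd_pow_sub_pow _ _ _
      have h1' : ((q:ℤ) + 1) ∣ ((q:ℤ)^(j+1) - (-1)^(j+1)) := by
        have he3 : (q:ℤ) - (-1) = (q:ℤ) + 1 := by ring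
        rwa [he3] at h1
      have h2 : ((q:ℤ) + 1) ∣ 2 * ((q:ℤ)+1) * c := ⟨2*c, by ring⟩
      have heq2 : e - (-1)^j = 2 * ((q:ℤ)+1) * c - ((q:ℤ)^(j+1) - (-1)^(j+1)) := by
        have hneg : ((-1:ℤ))^(j+1) = -(-1:ℤ)^j := by rw [pow_succ]; ring
        rw [he, hneg]; ring
      rw [heq2]
      exact dvd_sub h2 h1'
    have hs : ((-1:ℤ))^j = 1 ∨ ((-1:ℤ))^j = -1 := by
      rcases Nat.even_or_odd j with hje | hjo
      · exact Or.inl hje.neg_one_pow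
      · exact Or.inr hjo.neg_one_pow
    have hesz : e - (-1)^j = 0 := by
      apply Int.eq_zero_of_abs_lt_dvd hdvd
      rcases hs with h' | h' <;> rw [h'] <;> rw [abs_lt] <;> constructor <;> linarith
    have heven : (2:ℤ) ∣ e := by
      obtain ⟨u, hu⟩ := hqe
      have hq2 : (2:ℤ) ∣ (q:ℤ) := ⟨(u:ℤ), by exact_mod_cast (by omega : q = 2*u)⟩
      have hqj2 : (2:ℤ) ∣ (q:ℤ)^(j+1) := dvd_pow hq2 (by omega)
      rw [he]
      exact dvd_sub ⟨((q:ℤ)+1)*c, by ring⟩ hqj2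
    rcases hs with h' | h' <;> rw [h'] at hesz <;> omega
  -- convert to the ℕ bound and assemble
  have hlc : ((c.toNat : ℕ) : ℤ) = c := Int.toNat_of_nonneg (by linarith)
  have h1q : 1 ≤ q ^ j := Nat.one_le_pow _ _ (by omega)
  have hbound : c.toNat ≤ (q ^ j - 1) * q / (2 * (q + 1)) := by
    apply (Nat.le_div_iff_mul_le (by omega)).mpr
    zify [h1q]
    rw [hlc]
    have hr : ((q:ℤ)^j - 1) * (q:ℤ) = (q:ℤ)^(j+1) - (q:ℤ) := by ring
    linarith [hlb]
  refine ⟨j, c.toNat, h, hj1, hjm', by omega, hbound, ?_, ?_, ?_⟩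
  · rw [hlc]; nlinarith [habs1, heq]
  · rw [hlc]; nlinarith [habs2, heq]
  · rw [hlc]; exact heq

/-- A necessary and sufficient condition for `0 ≤ a ≤ q^m` to be the coset
leader of its `q`-cyclotomic coset modulo `n = q^m + 1`, when `q` is a power of 2. -/
theorem cosetLeader_iff_even_q (t m : ℕ) (ht : 1 ≤ t) (hm : 2 ≤ m)
    (q : ℕ) (hq : q = 2 ^ t) (n : ℕ) (hn : n = q ^ m + 1)
    (a : ℕ) (ha : a ≤ q ^ m) :
    (∀ j : ℕ, a ≤ (a * q ^ j) % n) ↔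
      (a ≤ (q ^ (m + 1) + q) / (2 * (q + 1)) ∧
        ¬ ∃ (i l : ℕ) (h : ℤ), 1 ≤ i ∧ i < m ∧ 1 ≤ l ∧
          l ≤ (q ^ i - 1) * q / (2 * (q + 1)) ∧
          (-(l : ℤ) * ((q : ℤ) ^ (m - i) - 1) < h * ((q : ℤ) ^ i + 1)) ∧
          (h * ((q : ℤ) ^ i - 1) < (l : ℤ) * ((q : ℤ) ^ (m - i) + 1)) ∧
          (a : ℤ) = (l : ℤ) * (q : ℤ) ^ (m - i) + h) := by
  have hq2 : 2 ≤ q := by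
    rw [hq]
    calc 2 = 2 ^ 1 := by norm_num
      _ ≤ 2 ^ t := Nat.pow_le_pow_right (by norm_num) ht
  have hqe : Even q := by
    rw [hq]
    exact Nat.even_pow.mpr ⟨even_two, by omega⟩
  constructor
  · intro hL
    constructor
    · by_contra hcon
      push_neg at hcon
      obtain ⟨j, hj1, hjm, c, hwit⟩ :=
        wit_of_large q n m a hq2 hqe (by omega) hn ha hcon
      obtain ⟨j', hj'⟩ := notLeader_of_wit q n m a (by omega) hn ha j c hwit
      exact absurd (hL j') (by omega)
    · rintro ⟨i, l, h, hi1, him, hl1, _, hin1, hin2, heq⟩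
      obtain ⟨_, j, hj1, hjm, c, hwit⟩ :=
        wit_of_triple q n m a hq2 hn i l h hi1 him hl1 hin1 hin2 heq
      obtain ⟨j', hj'⟩ := notLeader_of_wit q n m a (by omega) hn ha j c hwit
      exact absurd (hL j') (by omega)
  · rintro ⟨hd, hnex⟩ j
    by_contra hcon
    push_neg at hcon
    obtain ⟨j', hj1, hjm, c, hwit⟩ := wit_of_notLeader q n m a (by omega) hn ha j hcon
    exact hnex (triple_of_wit q n m a hq2 hqe hm hn ha hd j' hj1 hjm c hwit)
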